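/- Suppose the family Υ_n is admissible relative to the sets Ω(n,m) for G ↷ (X,ν). Let (K, d_K) be a compact metric space with Borel probability measure κ and a continuous κ-preserving G-action such that 1/3 ≤ κ(B(x,ε))/κ(B(y,ε)) ≤ 3 for every ε > 0 and all x,y ∈ K, where B(x,ε) = {z : d_K(x,z) ≤ ε}. For each integer n ≥ 1 and g ∈ G choose 0 < ρ(n,g) < 1/n such that d_K(x,y) ≤ ρ(n,g) implies d_K(g⁻¹x, g⁻¹y) ≤ 1/n. Define Υ'_n(g,b,k,b',k') = 1_{B(k,ρ(n,g))}(k') Υ_n(g,b,b') / κ(B(k,ρ(n,g))). Then the family Υ'_n is admissible relative to the sets Ω(n,m) × K for the diagonal action G ↷ (X × K, ν × κ), where X × K carries the metric d_{X×K}((b,k),(b',k')) = d(b,b') + d_K(k,k'). -/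

import Mathlib

open MeasureTheory Filter Metric Set
open scoped ENNReal

namespace StableRatio

variable {G : Type*} [Group G] [Countable G]

/-- The Radon–Nikodym derivative `d(ν∘g)/dν`, where `(ν∘g)(A) = ν(gA)`,
so that `ν∘g` is the pushforward of `ν` under the action of `g⁻¹`. -/
noncomputable def RN {Z : Type*} [MeasurableSpace Z] (act : G → Z → Z) (ν : Measure Z)
    (g : G) (z : Z) : ℝ :=
  ((ν.map (act g⁻¹)).rnDeriv ν z).toReal

/-- `R(g,η) = log (d(ν∘g)/dν)(η)`. -/
noncomputable def Rlog {Z : Type*} [MeasurableSpace Z] (act : G → Z → Z) (ν : Measure Z)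
    (g : G) (z : Z) : ℝ :=
  Real.log (RN act ν g z)

/-- A family of functions `Υ n : G → Z → Z → ℝ` is admissible relative to a family of
closed subsets `Ω n m ⊆ Z`, with constants `D C : ℕ → ℝ`, `N : ℕ → ℕ` and moduli
`fbd : ℕ → ℕ → ℝ`.  Here `dZ` is the metric on `Z` and `act` the (quasi-invariant)
action of `G` on `(Z,ν)`. -/
structure IsRelAdmissible {Z : Type*} [MeasurableSpace Z] [TopologicalSpace Z]
    (act : G → Z → Z) (dZ : Z → Z → ℝ) (ν : Measure Z) [SFinite ν]
    (Υ : ℕ → G → Z → Z → ℝ) (Ω : ℕ → ℕ → Set Z)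
    (D C : ℕ → ℝ) (N : ℕ → ℕ) (fbd : ℕ → ℕ → ℝ) : Prop where
  meas_Υ : ∀ (n : ℕ) (g : G), Measurable (Function.uncurry (Υ n g))
  nonneg_Υ : ∀ (n : ℕ) (g : G) (b b' : Z), 0 ≤ Υ n g b b'
  closed_Ω : ∀ n m : ℕ, IsClosed (Ω n m)
  D_pos : ∀ m : ℕ, 0 < D m
  D_lim : Tendsto D atTop (nhds 0)
  Ω_big : ∀ n m : ℕ, ENNReal.ofReal (1 - D m) < ν (Ω n m)
  f_lim : ∀ m : ℕ, Tendsto (fbd m) atTop (nhds 0)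
  close : ∀ (n m : ℕ) (g : G) (b b' : Z), b ∈ Ω n m → 0 < Υ n g b b' →
    dZ b b' < fbd m n ∧ dZ (act g⁻¹ b) (act g⁻¹ b') < fbd m n
  C_pos : ∀ m : ℕ, 0 < C m
  N_pos : ∀ m : ℕ, 0 < N m
  R_bound : ∀ (m n : ℕ), N m < n → ∀ g : G, ∀ᵐ p ∂(ν.prod ν),
    p.1 ∈ Ω n m → 0 < Υ n g p.1 p.2 →
      (|Rlog act ν g⁻¹ p.1| + |Rlog act ν g⁻¹ p.2| < C m ∧
        1 / C m ≤ |Rlog act ν g⁻¹ p.1 - Rlog act ν g⁻¹ p.2|)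
  normalized : ∀ (n : ℕ) (b : Z),
    (∑' g : G, ∫⁻ b', ENNReal.ofReal (Υ n g b b') ∂ν) = 1
  bdd₁ : ∀ (m n : ℕ), N m < n → ∀ᵐ b' ∂ν,
    (∫⁻ b in Ω n m, ∑' g : G, ENNReal.ofReal (Υ n g b b') ∂ν) ≤ ENNReal.ofReal (C m)
  bdd₂ : ∀ (m n : ℕ), N m < n → ∀ᵐ b' ∂ν,
    (∫⁻ b in Ω n m, ∑' g : G, ENNReal.ofReal (Υ n g b (act g b') * RN act ν g b') ∂ν)
      ≤ ENNReal.ofReal (C m)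
  bdd₃ : ∀ (m n : ℕ), N m < n → ∀ᵐ b ∂ν,
    (∫⁻ b', ∑' g : G, Set.indicator (Ω n m) (fun _ => (1 : ℝ≥0∞)) (act g b)
        * ENNReal.ofReal (Υ n g (act g b) b' * RN act ν g b') ∂ν) ≤ ENNReal.ofReal (C m)

/-- The measure `θ` on `ℝ` with `dθ = (1/2) e^{-|t|} dt`. -/
noncomputable def theta : Measure ℝ :=
  MeasureTheory.volume.withDensity (fun t : ℝ => ENNReal.ofReal ((1 / 2) * Real.exp (-|t|)))

instance : SFinite theta := by unfold theta; infer_instance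

/-- The measure `ζ_{n,m}` on `ℝ`:
`ζ_{n,m}(E) = Σ_{g∈G} ∫∫ 1_E(R(g⁻¹,b') − R(g⁻¹,b)) 1_{Ω(n,m)}(b) Υ_n(g,b,b') dν(b) dν(b')`. -/
noncomputable def zeta {Z : Type*} [MeasurableSpace Z] (act : G → Z → Z) (ν : Measure Z)
    [SFinite ν] (Υ : ℕ → G → Z → Z → ℝ) (Ω : ℕ → ℕ → Set Z) (n m : ℕ) : Measure ℝ :=
  Measure.sum fun g : G =>
    ((ν.prod ν).withDensity fun p =>
        Set.indicator (Ω n m) (fun _ => (1 : ℝ≥0∞)) p.1 * ENNReal.ofReal (Υ n g p.1 p.2)).map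
      fun p => Rlog act ν g⁻¹ p.2 - Rlog act ν g⁻¹ p.1

/-- The measure `ζ_{n,b}` on `ℝ`:
`ζ_{n,b}(E) = Σ_{g∈G} ∫ 1_E(R(g⁻¹,b') − R(g⁻¹,b)) Υ_n(g,b,b') dν(b')`. -/
noncomputable def zetaB {Z : Type*} [MeasurableSpace Z] (act : G → Z → Z) (ν : Measure Z)
    (Υ : ℕ → G → Z → Z → ℝ) (n : ℕ) (b : Z) : Measure ℝ :=
  Measure.sum fun g : G =>
    (ν.withDensity fun b' => ENNReal.ofReal (Υ n g b b')).map
      fun b' => Rlog act ν g⁻¹ b' - Rlog act ν g⁻¹ b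

/-- `μ` is a weak-* limit point of the sequence `μs`, i.e. the limit of some subsequence
in the weak-* topology (integration against bounded continuous functions). -/
def WeakStarLimitPoint (μs : ℕ → Measure ℝ) (μ : Measure ℝ) : Prop :=
  ∃ φ : ℕ → ℕ, StrictMono φ ∧
    ∀ f : BoundedContinuousFunction ℝ ℝ,
      Tendsto (fun k => ∫ x, f x ∂(μs (φ k))) atTop (nhds (∫ x, f x ∂μ))

/-- `T` belongs to the (topological) support of the measure `μ` on `ℝ`. -/
def MemSupport (μ : Measure ℝ) (T : ℝ) : Prop :=
  ∀ ε : ℝ, 0 < ε → 0 < μ (Metric.ball T ε)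

/-- `r` belongs to the ratio set of the action `act` of `G` on `(Z,μ)`. -/
def InRatioSet {Z : Type*} [MeasurableSpace Z] (act : G → Z → Z) (μ : Measure Z)
    (r : ℝ) : Prop :=
  ∀ A : Set Z, MeasurableSet A → 0 < μ A → ∀ ε : ℝ, 0 < ε →
    ∃ A' : Set Z, MeasurableSet A' ∧ A' ⊆ A ∧ 0 < μ A' ∧
      ∃ g : G, g ≠ 1 ∧ act g '' A' ⊆ A ∧ ∀ b ∈ A', |RN act μ g b - r| ≤ ε

/-- `r` belongs to the stable ratio set of the action `act` of `G` on `(Z,ν)`: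
`r` is in the ratio set of the product of the action with every probability
measure preserving action of `G`. -/
def InStableRatioSet {Z : Type*} [MeasurableSpace Z] (act : G → Z → Z) (ν : Measure Z)
    [SFinite ν] (r : ℝ) : Prop :=
  ∀ (Y : Type) [MeasurableSpace Y] (κ : Measure Y) [IsProbabilityMeasure κ]
    (aY : G → Y → Y),
    (∀ g : G, Measurable (aY g)) → aY 1 = id →
    (∀ g h : G, aY (g * h) = aY g ∘ aY h) →
    (∀ g : G, κ.map (aY g) = κ) →
    InRatioSet (fun g (p : Z × Y) => (act g p.1, aY g p.2)) (ν.prod κ) r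

/-- The operator `W_{n,m}`. -/
noncomputable def Wop {Z : Type*} [MeasurableSpace Z] (ν : Measure Z)
    (Υ : ℕ → G → Z → Z → ℝ) (Ω : ℕ → ℕ → Set Z) (n m : ℕ)
    (f : Z → ℝ → ℝ) (b : Z) (t : ℝ) : ℝ :=
  ∑' g : G, ∫ b', Set.indicator (Ω n m) (fun _ => (1 : ℝ)) b * Υ n g b b' * f b' t ∂ν

/-- The operator `X_{n,m}`. -/
noncomputable def Xop {Z : Type*} [MeasurableSpace Z] (act : G → Z → Z) (ν : Measure Z)
    (Υ : ℕ → G → Z → Z → ℝ) (Ω : ℕ → ℕ → Set Z) (n m : ℕ)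
    (f : Z → ℝ → ℝ) (b : Z) (t : ℝ) : ℝ :=
  ∑' g : G, ∫ b', Set.indicator (Ω n m) (fun _ => (1 : ℝ)) b * Υ n g b b' *
      f (act g⁻¹ b') (t + Rlog act ν g⁻¹ b') ∂ν

/-- The operator `Y_{n,m}`. -/
noncomputable def Yop {Z : Type*} [MeasurableSpace Z] (act : G → Z → Z) (ν : Measure Z)
    (Υ : ℕ → G → Z → Z → ℝ) (Ω : ℕ → ℕ → Set Z) (n m : ℕ)
    (f : Z → ℝ → ℝ) (b : Z) (t : ℝ) : ℝ :=
  ∑' g : G, ∫ b', Set.indicator (Ω n m) (fun _ => (1 : ℝ)) b * Υ n g b b' *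
      f (act g⁻¹ b) (t + Rlog act ν g⁻¹ b') ∂ν

/-- The operator `L_{n,m}`. -/
noncomputable def Lop {Z : Type*} [MeasurableSpace Z] (act : G → Z → Z) (ν : Measure Z)
    (Υ : ℕ → G → Z → Z → ℝ) (Ω : ℕ → ℕ → Set Z) (n m : ℕ)
    (f : Z → ℝ → ℝ) (b : Z) (t : ℝ) : ℝ :=
  ∑' g : G, ∫ b', Set.indicator (Ω n m) (fun _ => (1 : ℝ)) b * Υ n g b b' *
      f b (t + Rlog act ν g⁻¹ b' - Rlog act ν g⁻¹ b) ∂ν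


section Aux

variable {X K : Type*} [MeasurableSpace X] [MeasurableSpace K]

lemma prod_eq_withDensity (μ ν : Measure X) [IsFiniteMeasure μ] [IsFiniteMeasure ν]
    (κ : Measure K) [IsFiniteMeasure κ] (hac : μ ≪ ν) :
    μ.prod κ = (ν.prod κ).withDensity fun p => μ.rnDeriv ν p.1 := by
  have hm := Measure.measurable_rnDeriv μ ν
  refine Measure.prod_eq fun s t hs ht => ?_
  rw [withDensity_apply _ (hs.prod ht), ← Measure.prod_restrict]
  have : ∫⁻ p, μ.rnDeriv ν p.1 ∂((ν.restrict s).prod (κ.restrict t))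
      = (∫⁻ x in s, μ.rnDeriv ν x ∂ν) * ((κ.restrict t) Set.univ) := by
    have := MeasureTheory.lintegral_prod_mul (μ := ν.restrict s) (ν := κ.restrict t)
      (f := fun x => μ.rnDeriv ν x) (g := fun _ => 1) hm.aemeasurable aemeasurable_const
    simpa using this
  rw [this, Measure.setLIntegral_rnDeriv hac, Measure.restrict_apply_univ]

lemma rnDeriv_prod_fst (μ ν : Measure X) [IsFiniteMeasure μ] [IsFiniteMeasure ν]
    (κ : Measure K) [IsFiniteMeasure κ] (hac : μ ≪ ν) :
    (μ.prod κ).rnDeriv (ν.prod κ) =ᵐ[ν.prod κ] fun p => μ.rnDeriv ν p.1 := by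
  rw [prod_eq_withDensity μ ν κ hac]
  exact Measure.rnDeriv_withDensity (ν.prod κ)
    ((Measure.measurable_rnDeriv μ ν).comp measurable_fst)

end Aux


section Aux2

variable {K : Type*} [MetricSpace K] [MeasurableSpace K] [BorelSpace K]

lemma measurable_measure_cb [SecondCountableTopology K] (κ : Measure K) [SFinite κ] (r : ℝ) :
    Measurable fun k : K => κ (Metric.closedBall k r) := by
  have hS : MeasurableSet {p : K × K | dist p.2 p.1 ≤ r} :=
    (isClosed_le (continuous_snd.dist continuous_fst) continuous_const).measurableSet
  have hF : Measurable (Function.uncurry fun k k' : K =>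
      Set.indicator {p : K × K | dist p.2 p.1 ≤ r} (fun _ => (1 : ℝ≥0∞)) (k, k')) := by
    exact measurable_const.indicator hS
  have h2 := Measurable.lintegral_prod_right (ν := κ) hF
  convert h2 using 1
  funext k
  rw [← MeasureTheory.lintegral_indicator_one (measurableSet_closedBall (x := k) (ε := r))]
  refine lintegral_congr fun k' => ?_
  by_cases h : k' ∈ Metric.closedBall k r
  · rw [Set.indicator_of_mem h, Set.indicator_of_mem (by simpa [Metric.mem_closedBall] using h)]
    rfl
  · rw [Set.indicator_of_notMem h,
      Set.indicator_of_notMem (by simpa [Metric.mem_closedBall] using h)]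

omit [BorelSpace K] in
lemma cb_pos [CompactSpace K] (κ : Measure K) [IsProbabilityMeasure κ]
    (hball : ∀ ε : ℝ, 0 < ε → ∀ x y : K,
      κ (Metric.closedBall x ε) ≤ 3 * κ (Metric.closedBall y ε))
    {r : ℝ} (hr : 0 < r) (x : K) : κ (Metric.closedBall x r) ≠ 0 := by
  intro h0
  have hall : ∀ y : K, κ (Metric.ball y r) = 0 := by
    intro y
    refine le_antisymm ?_ zero_le
    calc κ (Metric.ball y r) ≤ κ (Metric.closedBall y r) :=
          measure_mono Metric.ball_subset_closedBall
      _ ≤ 3 * κ (Metric.closedBall x r) := hball r hr y x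
      _ = 0 := by rw [h0, mul_zero]
  obtain ⟨s, hs⟩ := isCompact_univ.elim_finite_subcover (fun y : K => Metric.ball y r)
    (fun y => Metric.isOpen_ball) (fun z _ => Set.mem_iUnion.2 ⟨z, Metric.mem_ball_self hr⟩)
  have : κ Set.univ ≤ ∑ y ∈ s, κ (Metric.ball y r) :=
    le_trans (measure_mono hs) (measure_biUnion_finset_le s _)
  simp [hall] at this

end Aux2


section Aux3

variable {K : Type*} [MetricSpace K] [MeasurableSpace K] [BorelSpace K]

lemma ofReal_helper (s : Set K) (k' : K) {u : ℝ} (hu : 0 ≤ u) {v : ℝ≥0∞} (h0 : v ≠ 0)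
    (ht : v ≠ ⊤) :
    ENNReal.ofReal (Set.indicator s (fun _ => (1 : ℝ)) k' * u / v.toReal)
      = ENNReal.ofReal u * (Set.indicator s (fun _ => (1 : ℝ≥0∞)) k' * v⁻¹) := by
  by_cases hk : k' ∈ s
  · rw [Set.indicator_of_mem hk, Set.indicator_of_mem hk, one_mul,
      ENNReal.ofReal_div_of_pos (ENNReal.toReal_pos h0 ht), ENNReal.ofReal_toReal ht,
      ENNReal.div_eq_inv_mul, mul_comm, one_mul]
  · rw [Set.indicator_of_notMem hk, Set.indicator_of_notMem hk]
    simp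

lemma lintegral_ind_inv (κ : Measure K) {s : Set K} (hs : MeasurableSet s)
    (h0 : κ s ≠ 0) (ht : κ s ≠ ⊤) :
    ∫⁻ k', Set.indicator s (fun _ => (1 : ℝ≥0∞)) k' * (κ s)⁻¹ ∂κ = 1 := by
  have : (fun k' => Set.indicator s (fun _ => (1 : ℝ≥0∞)) k' * (κ s)⁻¹)
      = Set.indicator s (fun _ => (κ s)⁻¹) := by
    funext k'
    by_cases hk : k' ∈ s
    · rw [Set.indicator_of_mem hk, Set.indicator_of_mem hk, one_mul]
    · rw [Set.indicator_of_notMem hk, Set.indicator_of_notMem hk, zero_mul]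
  rw [this, lintegral_indicator hs, setLIntegral_const, ENNReal.inv_mul_cancel h0 ht]

lemma lintegral_H_le (κ : Measure K) [IsFiniteMeasure κ]
    (hball : ∀ ε : ℝ, 0 < ε → ∀ x y : K,
      κ (Metric.closedBall x ε) ≤ 3 * κ (Metric.closedBall y ε))
    {r : ℝ} (hr : 0 < r) (hpos : ∀ x : K, κ (Metric.closedBall x r) ≠ 0) (k' : K) :
    ∫⁻ k, Set.indicator (Metric.closedBall k r) (fun _ => (1 : ℝ≥0∞)) k'
        * (κ (Metric.closedBall k r))⁻¹ ∂κ ≤ 3 := by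
  have hb0 := hpos k'
  have hbt : κ (Metric.closedBall k' r) ≠ ⊤ := measure_ne_top κ _
  have hpt : ∀ k, Set.indicator (Metric.closedBall k r) (fun _ => (1 : ℝ≥0∞)) k'
      * (κ (Metric.closedBall k r))⁻¹
      ≤ Set.indicator (Metric.closedBall k' r)
          (fun _ => 3 * (κ (Metric.closedBall k' r))⁻¹) k := by
    intro k
    by_cases hk : dist k k' ≤ r
    · have h1 : k' ∈ Metric.closedBall k r := by
        simpa [Metric.mem_closedBall, dist_comm] using hk
      have h2 : k ∈ Metric.closedBall k' r := by simpa [Metric.mem_closedBall] using hk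
      rw [Set.indicator_of_mem h1, Set.indicator_of_mem h2, one_mul]
      -- (κ (CB k r))⁻¹ ≤ 3 * (κ (CB k' r))⁻¹
      have h3 : (3 : ℝ≥0∞) * (κ (Metric.closedBall k' r))⁻¹
          = ((3 : ℝ≥0∞)⁻¹ * κ (Metric.closedBall k' r))⁻¹ := by
        rw [ENNReal.mul_inv (Or.inl (by simp)) (Or.inl (by simp)), inv_inv]
      rw [h3]
      refine ENNReal.inv_le_inv.2 ?_
      calc (3 : ℝ≥0∞)⁻¹ * κ (Metric.closedBall k' r)
          ≤ (3 : ℝ≥0∞)⁻¹ * (3 * κ (Metric.closedBall k r)) := by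
            gcongr
            exact hball r hr k' k
        _ = κ (Metric.closedBall k r) := by
            rw [← mul_assoc, ENNReal.inv_mul_cancel (by simp) (by simp), one_mul]
    · have h1 : k' ∉ Metric.closedBall k r := by
        simpa [Metric.mem_closedBall, dist_comm] using hk
      rw [Set.indicator_of_notMem h1, zero_mul]
      exact zero_le
  calc ∫⁻ k, Set.indicator (Metric.closedBall k r) (fun _ => (1 : ℝ≥0∞)) k'
        * (κ (Metric.closedBall k r))⁻¹ ∂κ
      ≤ ∫⁻ k, Set.indicator (Metric.closedBall k' r)
          (fun _ => 3 * (κ (Metric.closedBall k' r))⁻¹) k ∂κ := lintegral_mono hpt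
    _ = 3 * (κ (Metric.closedBall k' r))⁻¹ * κ (Metric.closedBall k' r) := by
        rw [lintegral_indicator measurableSet_closedBall, setLIntegral_const]
    _ = 3 := by rw [mul_assoc, ENNReal.inv_mul_cancel hb0 hbt, mul_one]

end Aux3

set_option linter.unusedSectionVars false in
set_option maxHeartbeats 1000000 in
theorem stmt12 {G X : Type*} [Group G] [Countable G]
    [MetricSpace X] [CompactSpace X] [MeasurableSpace X] [BorelSpace X]
    (act : G → X → X) (hact_one : act 1 = id)
    (hact_mul : ∀ g h : G, act (g * h) = act g ∘ act h)
    (hact_meas : ∀ g : G, Measurable (act g))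
    (ν : Measure X) [IsProbabilityMeasure ν]
    (hqi : ∀ g : G, ν.map (act g) ≪ ν ∧ ν ≪ ν.map (act g))
    (Υ : ℕ → G → X → X → ℝ) (Ω : ℕ → ℕ → Set X)
    (D C : ℕ → ℝ) (N : ℕ → ℕ) (fbd : ℕ → ℕ → ℝ)
    (hadm : IsRelAdmissible act (fun a b : X => dist a b) ν Υ Ω D C N fbd)
    {K : Type*} [MetricSpace K] [CompactSpace K] [MeasurableSpace K] [BorelSpace K]
    (κ : Measure K) [IsProbabilityMeasure κ]
    (aK : G → K → K) (haK_one : aK 1 = id)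
    (haK_mul : ∀ g h : G, aK (g * h) = aK g ∘ aK h)
    (haK_cont : ∀ g : G, Continuous (aK g))
    (haK_meas : ∀ g : G, Measurable (aK g))
    (haK_pres : ∀ g : G, κ.map (aK g) = κ)
    (hball : ∀ ε : ℝ, 0 < ε → ∀ x y : K,
      κ (Metric.closedBall x ε) ≤ 3 * κ (Metric.closedBall y ε))
    (ρ : ℕ → G → ℝ)
    (hρ : ∀ (n : ℕ) (g : G), 0 < ρ n g ∧ ρ n g < 1 / (n + 1) ∧
      ∀ x y : K, dist x y ≤ ρ n g → dist (aK g⁻¹ x) (aK g⁻¹ y) ≤ 1 / (n + 1)) :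
    ∃ (D' C' : ℕ → ℝ) (N' : ℕ → ℕ) (f' : ℕ → ℕ → ℝ),
      IsRelAdmissible (fun g (p : X × K) => (act g p.1, aK g p.2))
        (fun p q : X × K => dist p.1 q.1 + dist p.2 q.2) (ν.prod κ)
        (fun (n : ℕ) (g : G) (p q : X × K) =>
      (Set.indicator (Metric.closedBall p.2 (ρ n g)) (fun _ => (1 : ℝ)) q.2 * Υ n g p.1 q.1)
        / (κ (Metric.closedBall p.2 (ρ n g))).toReal)
        (fun n m => Ω n m ×ˢ (Set.univ : Set K)) D' C' N' f' := by
  classical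
  -- basic facts about the balls
  have hκ0 : ∀ (n : ℕ) (g : G) (k : K), κ (Metric.closedBall k (ρ n g)) ≠ 0 :=
    fun n g k => cb_pos κ hball (hρ n g).1 k
  have hκt : ∀ (n : ℕ) (g : G) (k : K), κ (Metric.closedBall k (ρ n g)) ≠ ⊤ :=
    fun n g k => measure_ne_top κ _
  -- positivity transfer
  have hΥ0 : ∀ (n : ℕ) (g : G) (p q : X × K),
      0 < Set.indicator (Metric.closedBall p.2 (ρ n g)) (fun _ => (1 : ℝ)) q.2 * Υ n g p.1 q.1
          / (κ (Metric.closedBall p.2 (ρ n g))).toReal →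
      0 < Υ n g p.1 q.1 ∧ q.2 ∈ Metric.closedBall p.2 (ρ n g) := by
    intro n g p q h
    by_cases hk : q.2 ∈ Metric.closedBall p.2 (ρ n g)
    · refine ⟨?_, hk⟩
      rw [Set.indicator_of_mem hk, one_mul] at h
      by_contra hle
      push_neg at hle
      have h0 : Υ n g p.1 q.1 = 0 := le_antisymm hle (hadm.nonneg_Υ n g p.1 q.1)
      rw [h0, zero_div] at h
      exact lt_irrefl 0 h
    · rw [Set.indicator_of_notMem hk, zero_mul, zero_div] at h
      exact absurd h (lt_irrefl 0)
  -- the ofReal identity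
  have hofR : ∀ (n : ℕ) (g : G) (p q : X × K),
      ENNReal.ofReal (Set.indicator (Metric.closedBall p.2 (ρ n g)) (fun _ => (1 : ℝ)) q.2
          * Υ n g p.1 q.1 / (κ (Metric.closedBall p.2 (ρ n g))).toReal)
        = ENNReal.ofReal (Υ n g p.1 q.1)
          * (Set.indicator (Metric.closedBall p.2 (ρ n g)) (fun _ => (1 : ℝ≥0∞)) q.2
            * (κ (Metric.closedBall p.2 (ρ n g)))⁻¹) :=
    fun n g p q => ofReal_helper _ _ (hadm.nonneg_Υ n g p.1 q.1) (hκ0 n g p.2) (hκt n g p.2)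
  -- measurability helpers
  have hmΥr : ∀ (n : ℕ) (g : G) (b : X), Measurable fun b' => Υ n g b b' :=
    fun n g b => (hadm.meas_Υ n g).comp measurable_prodMk_left
  have hmΥl : ∀ (n : ℕ) (g : G) (b' : X), Measurable fun b => Υ n g b b' :=
    fun n g b' => (hadm.meas_Υ n g).comp (measurable_id.prodMk measurable_const)
  have hmRN : ∀ g : G, Measurable (RN act ν g) :=
    fun g => (Measure.measurable_rnDeriv _ _).ennreal_toReal
  have hmΥ' : ∀ (n : ℕ) (g : G), Measurable (Function.uncurry fun p q : X × K =>
      Set.indicator (Metric.closedBall p.2 (ρ n g)) (fun _ => (1 : ℝ)) q.2 * Υ n g p.1 q.1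
        / (κ (Metric.closedBall p.2 (ρ n g))).toReal) := by
    intro n g
    have hset : MeasurableSet {z : (X × K) × (X × K) | dist z.2.2 z.1.2 ≤ ρ n g} :=
      (isClosed_le (continuous_snd.snd.dist continuous_fst.snd) continuous_const).measurableSet
    have hind : Measurable fun z : (X × K) × (X × K) =>
        Set.indicator (Metric.closedBall z.1.2 (ρ n g)) (fun _ => (1 : ℝ)) z.2.2 := by
      have heq : (fun z : (X × K) × (X × K) =>
          Set.indicator (Metric.closedBall z.1.2 (ρ n g)) (fun _ => (1 : ℝ)) z.2.2)
          = Set.indicator {z : (X × K) × (X × K) | dist z.2.2 z.1.2 ≤ ρ n g}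
              (fun _ => (1 : ℝ)) := by
        funext z
        by_cases h : dist z.2.2 z.1.2 ≤ ρ n g
        · rw [Set.indicator_of_mem (by simpa [Metric.mem_closedBall] using h),
            Set.indicator_of_mem
              (show z ∈ {z : (X × K) × (X × K) | dist z.2.2 z.1.2 ≤ ρ n g} from h)]
        · rw [Set.indicator_of_notMem (by simpa [Metric.mem_closedBall] using h),
            Set.indicator_of_notMem
              (show z ∉ {z : (X × K) × (X × K) | dist z.2.2 z.1.2 ≤ ρ n g} from h)]
      rw [heq]
      exact measurable_const.indicator hset
    have hU : Measurable fun z : (X × K) × (X × K) => Υ n g z.1.1 z.2.1 :=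
      (hadm.meas_Υ n g).comp (measurable_fst.fst.prodMk measurable_snd.fst)
    have hc : Measurable fun z : (X × K) × (X × K) =>
        (κ (Metric.closedBall z.1.2 (ρ n g))).toReal :=
      ((measurable_measure_cb κ _).comp measurable_fst.snd).ennreal_toReal
    exact (hind.mul hU).div hc
  -- the RN derivative for the product action
  have hfinmap : ∀ g : G, IsFiniteMeasure (ν.map (act g)) := fun g =>
    ⟨by rw [Measure.map_apply (hact_meas g) MeasurableSet.univ]; exact measure_lt_top ν _⟩
  have hRN : ∀ g : G, ∀ᵐ z ∂(ν.prod κ),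
      RN (fun g (p : X × K) => (act g p.1, aK g p.2)) (ν.prod κ) g z = RN act ν g z.1 := by
    intro g
    have hmap : (ν.prod κ).map (fun p : X × K => (act g⁻¹ p.1, aK g⁻¹ p.2))
        = (ν.map (act g⁻¹)).prod κ := by
      have h1 : (fun p : X × K => (act g⁻¹ p.1, aK g⁻¹ p.2))
          = Prod.map (act g⁻¹) (aK g⁻¹) := rfl
      rw [h1, ← Measure.map_prod_map _ _ (hact_meas g⁻¹) (haK_meas g⁻¹), haK_pres g⁻¹]
    haveI := hfinmap g⁻¹
    filter_upwards [rnDeriv_prod_fst (ν.map (act g⁻¹)) ν κ (hqi g⁻¹).1] with z hz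
    simp only [RN]
    rw [hmap, hz]
  have hRNall : ∀ᵐ z ∂(ν.prod κ), ∀ g : G,
      RN (fun g (p : X × K) => (act g p.1, aK g p.2)) (ν.prod κ) g z = RN act ν g z.1 :=
    ae_all_iff.2 hRN
  have hRlogall : ∀ᵐ z ∂(ν.prod κ), ∀ g : G,
      Rlog (fun g (p : X × K) => (act g p.1, aK g p.2)) (ν.prod κ) g z = Rlog act ν g z.1 := by
    filter_upwards [hRNall] with z hz g
    rw [Rlog, Rlog, hz g]
  -- quasi-measure-preserving projections
  have hqfst : Measure.QuasiMeasurePreserving (Prod.fst : X × K → X) (ν.prod κ) ν := by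
    refine ⟨measurable_fst, ?_⟩
    rw [Measure.map_fst_prod, measure_univ, one_smul]
  have hqfstP : Measure.QuasiMeasurePreserving (Prod.fst : (X × K) × (X × K) → X × K)
      ((ν.prod κ).prod (ν.prod κ)) (ν.prod κ) := by
    refine ⟨measurable_fst, ?_⟩
    rw [Measure.map_fst_prod, measure_univ, one_smul]
  have hqsndP : Measure.QuasiMeasurePreserving (Prod.snd : (X × K) × (X × K) → X × K)
      ((ν.prod κ).prod (ν.prod κ)) (ν.prod κ) := by
    refine ⟨measurable_snd, ?_⟩
    rw [Measure.map_snd_prod, measure_univ, one_smul]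
  have hqF : Measure.QuasiMeasurePreserving
      (fun pq : (X × K) × (X × K) => (pq.1.1, pq.2.1))
      ((ν.prod κ).prod (ν.prod κ)) (ν.prod ν) := by
    refine ⟨measurable_fst.fst.prodMk measurable_snd.fst, ?_⟩
    have h1 : (fun pq : (X × K) × (X × K) => (pq.1.1, pq.2.1))
        = Prod.map (Prod.fst : X × K → X) (Prod.fst : X × K → X) := rfl
    rw [h1, ← Measure.map_prod_map _ _ measurable_fst measurable_fst,
      Measure.map_fst_prod, measure_univ, one_smul]
  have hRNnn : ∀ (g : G) (b : X), 0 ≤ RN act ν g b := fun g b => ENNReal.toReal_nonneg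
  have hmH : ∀ (n : ℕ) (g : G) (k' : K), Measurable fun k : K =>
      (Metric.closedBall k (ρ n g)).indicator (fun _ => (1 : ℝ≥0∞)) k'
        * (κ (Metric.closedBall k (ρ n g)))⁻¹ := by
    intro n g k'
    have heq : (fun k : K => (Metric.closedBall k (ρ n g)).indicator (fun _ => (1 : ℝ≥0∞)) k')
        = (Metric.closedBall k' (ρ n g)).indicator (fun _ => (1 : ℝ≥0∞)) := by
      funext k
      by_cases h : dist k k' ≤ ρ n g
      · rw [Set.indicator_of_mem (by simpa [Metric.mem_closedBall, dist_comm] using h),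
          Set.indicator_of_mem (by simpa [Metric.mem_closedBall] using h)]
      · rw [Set.indicator_of_notMem
            (by simpa [Metric.mem_closedBall, dist_comm] using h),
          Set.indicator_of_notMem (by simpa [Metric.mem_closedBall] using h)]
    exact ((heq ▸ (measurable_const.indicator measurableSet_closedBall) :
      Measurable fun k : K =>
        (Metric.closedBall k (ρ n g)).indicator (fun _ => (1 : ℝ≥0∞)) k')).mul
      (measurable_measure_cb κ _).inv
  refine ⟨D, fun m => 3 * C m, N, fun m n => fbd m n + 2 / (n + 1), ?_⟩
  constructor
  case meas_Υ => exact hmΥ'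
  case nonneg_Υ =>
    intro n g p q
    exact div_nonneg (mul_nonneg (Set.indicator_nonneg (fun _ _ => zero_le_one) _)
      (hadm.nonneg_Υ n g p.1 q.1)) ENNReal.toReal_nonneg
  case closed_Ω => exact fun n m => (hadm.closed_Ω n m).prod isClosed_univ
  case D_pos => exact hadm.D_pos
  case D_lim => exact hadm.D_lim
  case Ω_big =>
    intro n m
    rw [Measure.prod_prod, measure_univ, mul_one]
    exact hadm.Ω_big n m
  case f_lim =>
    intro m
    have h2 : Tendsto (fun n : ℕ => 2 / ((n : ℝ) + 1)) atTop (nhds 0) := by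
      have h := tendsto_one_div_add_atTop_nhds_zero_nat.const_mul (2 : ℝ)
      simpa [mul_one_div, div_eq_mul_inv] using h
    simpa using (hadm.f_lim m).add h2
  case close =>
    intro n m g p q hmem hpos
    obtain ⟨hΥpos, hk⟩ := hΥ0 n g p q hpos
    obtain ⟨h1, h2⟩ := hadm.close n m g p.1 q.1 (Set.mem_prod.1 hmem).1 hΥpos
    have hd : dist p.2 q.2 ≤ ρ n g := by
      rw [dist_comm]
      exact Metric.mem_closedBall.1 hk
    have hn1 : (0 : ℝ) < (n : ℝ) + 1 := by positivity
    have h12 : (1 : ℝ) / ((n : ℝ) + 1) < 2 / ((n : ℝ) + 1) := by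
      rw [div_lt_div_iff₀ hn1 hn1]
      nlinarith
    have hρlt := (hρ n g).2.1
    constructor
    · have : dist p.2 q.2 < 2 / ((n : ℝ) + 1) := lt_of_le_of_lt hd (lt_trans hρlt h12)
      linarith
    · have h3 : dist (aK g⁻¹ p.2) (aK g⁻¹ q.2) ≤ 1 / ((n : ℝ) + 1) :=
        (hρ n g).2.2 p.2 q.2 hd
      have : dist (aK g⁻¹ p.2) (aK g⁻¹ q.2) < 2 / ((n : ℝ) + 1) := lt_of_le_of_lt h3 h12
      linarith
  case C_pos =>
    intro m
    have := hadm.C_pos m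
    linarith
  case N_pos => exact hadm.N_pos
  case R_bound =>
    intro m n hn g
    filter_upwards [hqF.ae (hadm.R_bound m n hn g), hqfstP.ae hRlogall, hqsndP.ae hRlogall]
      with pq hb he1 he2 hmem hpos
    have hmem' : pq.1.1 ∈ Ω n m := (Set.mem_prod.1 hmem).1
    have hpos' : 0 < Υ n g pq.1.1 pq.2.1 := (hΥ0 n g pq.1 pq.2 hpos).1
    obtain ⟨hA, hB⟩ := hb hmem' hpos'
    rw [he1 g⁻¹, he2 g⁻¹]
    have hC := hadm.C_pos m
    refine ⟨lt_of_lt_of_le hA (by linarith), le_trans ?_ hB⟩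
    rw [div_le_div_iff₀ (by linarith) hC]
    nlinarith
  case normalized =>
    intro n p
    have key : ∀ g : G, (∫⁻ q, ENNReal.ofReal
        (Set.indicator (Metric.closedBall p.2 (ρ n g)) (fun _ => (1 : ℝ)) q.2
          * Υ n g p.1 q.1 / (κ (Metric.closedBall p.2 (ρ n g))).toReal) ∂(ν.prod κ))
        = ∫⁻ b', ENNReal.ofReal (Υ n g p.1 b') ∂ν := by
      intro g
      rw [lintegral_congr (fun q : X × K => hofR n g p q)]
      rw [MeasureTheory.lintegral_prod_mul (f := fun b' => ENNReal.ofReal (Υ n g p.1 b'))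
        (g := fun k' => Set.indicator (Metric.closedBall p.2 (ρ n g)) (fun _ => (1 : ℝ≥0∞)) k'
          * (κ (Metric.closedBall p.2 (ρ n g)))⁻¹)
        ((hmΥr n g p.1).ennreal_ofReal.aemeasurable)
        (((measurable_const.indicator measurableSet_closedBall).mul_const _).aemeasurable)]
      rw [lintegral_ind_inv κ measurableSet_closedBall (hκ0 n g p.2) (hκt n g p.2), mul_one]
    rw [tsum_congr key]
    exact hadm.normalized n p.1
  case bdd₁ =>
    intro m n hn
    filter_upwards [hqfst.ae (hadm.bdd₁ m n hn)] with q hq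
    have hres : (ν.prod κ).restrict ((Ω n m) ×ˢ (Set.univ : Set K))
        = (ν.restrict (Ω n m)).prod κ := (Measure.restrict_prod_eq_prod_univ _).symm
    rw [hres]
    rw [lintegral_tsum (f := fun (g : G) (p : X × K) => ENNReal.ofReal
        ((Metric.closedBall p.2 (ρ n g)).indicator (fun _ => (1 : ℝ)) q.2 * Υ n g p.1 q.1
          / (κ (Metric.closedBall p.2 (ρ n g))).toReal))
      (fun g => (((hmΥ' n g).comp
        (measurable_id.prodMk measurable_const)).ennreal_ofReal).aemeasurable)]
    have hterm : ∀ g : G, (∫⁻ p, ENNReal.ofReal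
        (Set.indicator (Metric.closedBall p.2 (ρ n g)) (fun _ => (1 : ℝ)) q.2
          * Υ n g p.1 q.1 / (κ (Metric.closedBall p.2 (ρ n g))).toReal)
          ∂((ν.restrict (Ω n m)).prod κ))
        ≤ (∫⁻ b in Ω n m, ENNReal.ofReal (Υ n g b q.1) ∂ν) * 3 := by
      intro g
      rw [lintegral_congr (fun p : X × K => hofR n g p q)]
      rw [MeasureTheory.lintegral_prod_mul (f := fun b => ENNReal.ofReal (Υ n g b q.1))
        (g := fun k => Set.indicator (Metric.closedBall k (ρ n g)) (fun _ => (1 : ℝ≥0∞)) q.2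
          * (κ (Metric.closedBall k (ρ n g)))⁻¹)
        ((hmΥl n g q.1).ennreal_ofReal.aemeasurable) ?_]
      · exact mul_le_mul_right (lintegral_H_le κ hball (hρ n g).1 (hκ0 n g) q.2) _
      · refine Measurable.aemeasurable (Measurable.mul ?_ ?_)
        · have heq : (fun k : K => Set.indicator (Metric.closedBall k (ρ n g))
              (fun _ => (1 : ℝ≥0∞)) q.2)
              = Set.indicator (Metric.closedBall q.2 (ρ n g)) (fun _ => (1 : ℝ≥0∞)) := by
            funext k
            by_cases h : dist k q.2 ≤ ρ n g
            · rw [Set.indicator_of_mem (by simpa [Metric.mem_closedBall, dist_comm] using h),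
                Set.indicator_of_mem (by simpa [Metric.mem_closedBall] using h)]
            · rw [Set.indicator_of_notMem
                  (by simpa [Metric.mem_closedBall, dist_comm] using h),
                Set.indicator_of_notMem (by simpa [Metric.mem_closedBall] using h)]
          rw [heq]
          exact measurable_const.indicator measurableSet_closedBall
        · exact (measurable_measure_cb κ _).inv
    calc (∑' g : G, ∫⁻ p, ENNReal.ofReal
          (Set.indicator (Metric.closedBall p.2 (ρ n g)) (fun _ => (1 : ℝ)) q.2
            * Υ n g p.1 q.1 / (κ (Metric.closedBall p.2 (ρ n g))).toReal)
            ∂((ν.restrict (Ω n m)).prod κ))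
        ≤ ∑' g : G, (∫⁻ b in Ω n m, ENNReal.ofReal (Υ n g b q.1) ∂ν) * 3 :=
          ENNReal.tsum_le_tsum hterm
      _ = (∑' g : G, ∫⁻ b in Ω n m, ENNReal.ofReal (Υ n g b q.1) ∂ν) * 3 :=
          ENNReal.tsum_mul_right
      _ = (∫⁻ b in Ω n m, ∑' g : G, ENNReal.ofReal (Υ n g b q.1) ∂ν) * 3 := by
          rw [lintegral_tsum (fun g => ((hmΥl n g q.1).ennreal_ofReal).aemeasurable)]
      _ ≤ ENNReal.ofReal (C m) * 3 := mul_le_mul_left hq _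
      _ = ENNReal.ofReal (3 * C m) := by
          rw [ENNReal.ofReal_mul (by norm_num : (0 : ℝ) ≤ 3), mul_comm]
          norm_num
  case bdd₂ =>
    intro m n hn
    filter_upwards [hqfst.ae (hadm.bdd₂ m n hn), hRNall] with q hq hqRN
    have hres : (ν.prod κ).restrict ((Ω n m) ×ˢ (Set.univ : Set K))
        = (ν.restrict (Ω n m)).prod κ := (Measure.restrict_prod_eq_prod_univ _).symm
    rw [hres]
    have hint : ∀ (p : X × K) (g : G),
        ENNReal.ofReal ((Metric.closedBall p.2 (ρ n g)).indicator (fun _ => (1 : ℝ)) (aK g q.2)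
            * Υ n g p.1 (act g q.1) / (κ (Metric.closedBall p.2 (ρ n g))).toReal
          * RN (fun g (p : X × K) => (act g p.1, aK g p.2)) (ν.prod κ) g q)
        = ENNReal.ofReal (Υ n g p.1 (act g q.1) * RN act ν g q.1)
          * ((Metric.closedBall p.2 (ρ n g)).indicator (fun _ => (1 : ℝ≥0∞)) (aK g q.2)
            * (κ (Metric.closedBall p.2 (ρ n g)))⁻¹) := by
      intro p g
      rw [hqRN g]
      have hre : (Metric.closedBall p.2 (ρ n g)).indicator (fun _ => (1 : ℝ)) (aK g q.2)
          * Υ n g p.1 (act g q.1) / (κ (Metric.closedBall p.2 (ρ n g))).toReal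
          * RN act ν g q.1
          = (Metric.closedBall p.2 (ρ n g)).indicator (fun _ => (1 : ℝ)) (aK g q.2)
            * (Υ n g p.1 (act g q.1) * RN act ν g q.1)
            / (κ (Metric.closedBall p.2 (ρ n g))).toReal := by ring
      rw [hre]
      exact ofReal_helper _ _
        (mul_nonneg (hadm.nonneg_Υ n g p.1 (act g q.1)) ENNReal.toReal_nonneg)
        (hκ0 n g p.2) (hκt n g p.2)
    rw [lintegral_congr (fun p : X × K => tsum_congr (fun g => hint p g))]
    rw [lintegral_tsum (f := fun (g : G) (p : X × K) =>
        ENNReal.ofReal (Υ n g p.1 (act g q.1) * RN act ν g q.1)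
          * ((Metric.closedBall p.2 (ρ n g)).indicator (fun _ => (1 : ℝ≥0∞)) (aK g q.2)
            * (κ (Metric.closedBall p.2 (ρ n g)))⁻¹))
      (fun g => ((((hmΥl n g (act g q.1)).mul_const _).ennreal_ofReal.comp measurable_fst).mul
        ((hmH n g (aK g q.2)).comp measurable_snd)).aemeasurable)]
    have hterm : ∀ g : G, (∫⁻ p : X × K,
        ENNReal.ofReal (Υ n g p.1 (act g q.1) * RN act ν g q.1)
          * ((Metric.closedBall p.2 (ρ n g)).indicator (fun _ => (1 : ℝ≥0∞)) (aK g q.2)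
            * (κ (Metric.closedBall p.2 (ρ n g)))⁻¹)
          ∂((ν.restrict (Ω n m)).prod κ))
        ≤ (∫⁻ b in Ω n m,
            ENNReal.ofReal (Υ n g b (act g q.1) * RN act ν g q.1) ∂ν) * 3 := by
      intro g
      rw [MeasureTheory.lintegral_prod_mul
        (f := fun b => ENNReal.ofReal (Υ n g b (act g q.1) * RN act ν g q.1))
        (g := fun k => (Metric.closedBall k (ρ n g)).indicator (fun _ => (1 : ℝ≥0∞)) (aK g q.2)
          * (κ (Metric.closedBall k (ρ n g)))⁻¹)
        (((hmΥl n g (act g q.1)).mul_const _).ennreal_ofReal.aemeasurable)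
        ((hmH n g (aK g q.2)).aemeasurable)]
      exact mul_le_mul_right (lintegral_H_le κ hball (hρ n g).1 (hκ0 n g) (aK g q.2)) _
    calc (∑' g : G, ∫⁻ p : X × K,
          ENNReal.ofReal (Υ n g p.1 (act g q.1) * RN act ν g q.1)
            * ((Metric.closedBall p.2 (ρ n g)).indicator (fun _ => (1 : ℝ≥0∞)) (aK g q.2)
              * (κ (Metric.closedBall p.2 (ρ n g)))⁻¹)
            ∂((ν.restrict (Ω n m)).prod κ))
        ≤ ∑' g : G, (∫⁻ b in Ω n m,
            ENNReal.ofReal (Υ n g b (act g q.1) * RN act ν g q.1) ∂ν) * 3 :=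
          ENNReal.tsum_le_tsum hterm
      _ = (∑' g : G, ∫⁻ b in Ω n m,
            ENNReal.ofReal (Υ n g b (act g q.1) * RN act ν g q.1) ∂ν) * 3 :=
          ENNReal.tsum_mul_right
      _ = (∫⁻ b in Ω n m, ∑' g : G,
            ENNReal.ofReal (Υ n g b (act g q.1) * RN act ν g q.1) ∂ν) * 3 := by
          rw [lintegral_tsum
            (fun g => ((hmΥl n g (act g q.1)).mul_const _).ennreal_ofReal.aemeasurable)]
      _ ≤ ENNReal.ofReal (C m) * 3 := mul_le_mul_left hq _
      _ = ENNReal.ofReal (3 * C m) := by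
          rw [ENNReal.ofReal_mul (by norm_num : (0 : ℝ) ≤ 3), mul_comm]
          norm_num
  case bdd₃ =>
    intro m n hn
    filter_upwards [hqfst.ae (hadm.bdd₃ m n hn)] with p hp
    have hcong : (fun q : X × K => ∑' g : G,
        Set.indicator (Ω n m ×ˢ (Set.univ : Set K)) (fun _ => (1 : ℝ≥0∞))
          (act g p.1, aK g p.2)
        * ENNReal.ofReal
          ((Metric.closedBall (aK g p.2) (ρ n g)).indicator (fun _ => (1 : ℝ)) q.2
            * Υ n g (act g p.1) q.1 / (κ (Metric.closedBall (aK g p.2) (ρ n g))).toReal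
          * RN (fun g (p : X × K) => (act g p.1, aK g p.2)) (ν.prod κ) g q))
        =ᵐ[ν.prod κ] fun q : X × K => ∑' g : G,
          (Set.indicator (Ω n m) (fun _ => (1 : ℝ≥0∞)) (act g p.1)
            * ENNReal.ofReal (Υ n g (act g p.1) q.1 * RN act ν g q.1))
          * ((Metric.closedBall (aK g p.2) (ρ n g)).indicator (fun _ => (1 : ℝ≥0∞)) q.2
            * (κ (Metric.closedBall (aK g p.2) (ρ n g)))⁻¹) := by
      filter_upwards [hRNall] with q hqRN
      refine tsum_congr fun g => ?_
      rw [hqRN g]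
      have hindeq : Set.indicator (Ω n m ×ˢ (Set.univ : Set K)) (fun _ => (1 : ℝ≥0∞))
          (act g p.1, aK g p.2)
          = Set.indicator (Ω n m) (fun _ => (1 : ℝ≥0∞)) (act g p.1) := by
        by_cases h : act g p.1 ∈ Ω n m
        · rw [Set.indicator_of_mem (Set.mem_prod.2 ⟨h, Set.mem_univ _⟩),
            Set.indicator_of_mem h]
        · rw [Set.indicator_of_notMem (fun hc => h (Set.mem_prod.1 hc).1),
            Set.indicator_of_notMem h]
      have hre : (Metric.closedBall (aK g p.2) (ρ n g)).indicator (fun _ => (1 : ℝ)) q.2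
          * Υ n g (act g p.1) q.1 / (κ (Metric.closedBall (aK g p.2) (ρ n g))).toReal
          * RN act ν g q.1
          = (Metric.closedBall (aK g p.2) (ρ n g)).indicator (fun _ => (1 : ℝ)) q.2
            * (Υ n g (act g p.1) q.1 * RN act ν g q.1)
            / (κ (Metric.closedBall (aK g p.2) (ρ n g))).toReal := by ring
      rw [hindeq, hre]
      rw [ofReal_helper (Metric.closedBall (aK g p.2) (ρ n g)) q.2
        (mul_nonneg (hadm.nonneg_Υ n g (act g p.1) q.1) (hRNnn g q.1))
        (hκ0 n g (aK g p.2)) (hκt n g (aK g p.2))]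
      ring
    rw [lintegral_congr_ae hcong]
    rw [lintegral_tsum (f := fun (g : G) (q : X × K) =>
        (Set.indicator (Ω n m) (fun _ => (1 : ℝ≥0∞)) (act g p.1)
          * ENNReal.ofReal (Υ n g (act g p.1) q.1 * RN act ν g q.1))
        * ((Metric.closedBall (aK g p.2) (ρ n g)).indicator (fun _ => (1 : ℝ≥0∞)) q.2
          * (κ (Metric.closedBall (aK g p.2) (ρ n g)))⁻¹))
      (fun g => (((measurable_const.mul
          ((hmΥr n g (act g p.1)).mul (hmRN g)).ennreal_ofReal).comp measurable_fst).mul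
        (((measurable_const.indicator measurableSet_closedBall).mul_const _).comp
          measurable_snd)).aemeasurable)]
    have hterm : ∀ g : G, (∫⁻ q : X × K,
        (Set.indicator (Ω n m) (fun _ => (1 : ℝ≥0∞)) (act g p.1)
          * ENNReal.ofReal (Υ n g (act g p.1) q.1 * RN act ν g q.1))
        * ((Metric.closedBall (aK g p.2) (ρ n g)).indicator (fun _ => (1 : ℝ≥0∞)) q.2
          * (κ (Metric.closedBall (aK g p.2) (ρ n g)))⁻¹) ∂(ν.prod κ))
        = ∫⁻ b', Set.indicator (Ω n m) (fun _ => (1 : ℝ≥0∞)) (act g p.1)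
            * ENNReal.ofReal (Υ n g (act g p.1) b' * RN act ν g b') ∂ν := by
      intro g
      rw [MeasureTheory.lintegral_prod_mul
        (f := fun b' => Set.indicator (Ω n m) (fun _ => (1 : ℝ≥0∞)) (act g p.1)
          * ENNReal.ofReal (Υ n g (act g p.1) b' * RN act ν g b'))
        (g := fun k' => (Metric.closedBall (aK g p.2) (ρ n g)).indicator
            (fun _ => (1 : ℝ≥0∞)) k' * (κ (Metric.closedBall (aK g p.2) (ρ n g)))⁻¹)
        ((measurable_const.mul
          ((hmΥr n g (act g p.1)).mul (hmRN g)).ennreal_ofReal).aemeasurable)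
        (((measurable_const.indicator measurableSet_closedBall).mul_const _).aemeasurable)]
      rw [lintegral_ind_inv κ measurableSet_closedBall (hκ0 n g (aK g p.2))
        (hκt n g (aK g p.2)), mul_one]
    rw [tsum_congr hterm, ← lintegral_tsum (f := fun (g : G) (b' : X) =>
      Set.indicator (Ω n m) (fun _ => (1 : ℝ≥0∞)) (act g p.1)
        * ENNReal.ofReal (Υ n g (act g p.1) b' * RN act ν g b')) (fun g => (measurable_const.mul
      ((hmΥr n g (act g p.1)).mul (hmRN g)).ennreal_ofReal).aemeasurable)]
    refine le_trans hp (ENNReal.ofReal_le_ofReal ?_)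
    have := hadm.C_pos m
    linarith




end StableRatio
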